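/- Let n ∈ ℤ₊ ∪ {∞} and let u, v ∈ C_φ^{(n+1)}. Then on (α,β) the Lie bracket of the vector fields u·X and v·X satisfies [u·X, v·X] = (u·X(v) − v·X(u))·X, and the coefficient u·X(v) − v·X(u) belongs to C_φ^{(n)}. Hence [V_φ^{(n+1)}, V_φ^{(n+1)}] ⊂ V_φ^{(n)}, where V_φ^{(m)} := { w·X : w ∈ C_φ^{(m)} }. -/

import Mathlib

open Real Set Filter Topology

/-- The open interval `(α, β)` of real numbers, where `α β` are extended reals. -/
def EI (α β : EReal) : Set ℝ := {x : ℝ | α < (x : EReal) ∧ (x : EReal) < β}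

/-- `u : ℝ → ℝ` (thought of as a function on `(α, β)`) extends to a continuous
function on `[α, β] ⊆ EReal`. -/
def ContExt (α β : EReal) (u : ℝ → ℝ) : Prop :=
  ∃ g : EReal → ℝ, ContinuousOn g (Set.Icc α β) ∧
    ∀ x : ℝ, x ∈ EI α β → g (x : EReal) = u x

/-- The operator `X u := φ · u′`. -/
noncomputable def Xop (φ u : ℝ → ℝ) : ℝ → ℝ := fun x => φ x * deriv u x

/-- The iterates `X^k u`. -/
noncomputable def Xiter (φ : ℝ → ℝ) : ℕ → (ℝ → ℝ) → (ℝ → ℝ)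
  | 0, u => u
  | n + 1, u => Xop φ (Xiter φ n u)

/-- The space `C_φ^{(n)}`: inductively, `C_φ^{(0)}` consists of the functions having a
continuous extension to `[α, β]`, and `u ∈ C_φ^{(n+1)}` iff `u ∈ C_φ^{(n)}`, `X^n u` is
differentiable on `(α, β)`, and `X^{n+1} u` extends to a continuous function on `[α, β]`. -/
def CN (α β : EReal) (φ : ℝ → ℝ) : ℕ → Set (ℝ → ℝ)
  | 0 => {u | ContExt α β u}
  | n + 1 => {u | u ∈ CN α β φ n ∧
      (∀ x ∈ EI α β, DifferentiableAt ℝ (Xiter φ n u) x) ∧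
      ContExt α β (Xiter φ (n + 1) u)}

/-- The space `C_φ^{(∞)} := ⋂ₙ C_φ^{(n)}`. -/
def Cinf (α β : EReal) (φ : ℝ → ℝ) : Set (ℝ → ℝ) := ⋂ n : ℕ, CN α β φ n

/-- The spaces `C_φ^{(n)}` for `n ∈ ℤ₊ ∪ {∞}`. -/
def CNE (α β : EReal) (φ : ℝ → ℝ) (n : ℕ∞) : Set (ℝ → ℝ) :=
  WithTop.recTopCoe (Cinf α β φ) (fun k => CN α β φ k) n

lemma EI_isOpen (α β : EReal) : IsOpen (EI α β) :=
  (isOpen_Ioo (a := α) (b := β)).preimage continuous_coe_real_ereal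

lemma eqOn_nhds {α β : EReal} {u v : ℝ → ℝ} (h : ∀ x ∈ EI α β, u x = v x) {x : ℝ}
    (hx : x ∈ EI α β) : u =ᶠ[nhds x] v :=
  Filter.eventuallyEq_of_mem ((EI_isOpen α β).mem_nhds hx) h

lemma Xiter_congr {α β : EReal} (φ : ℝ → ℝ) {u v : ℝ → ℝ}
    (h : ∀ x ∈ EI α β, u x = v x) :
    ∀ k, ∀ x ∈ EI α β, Xiter φ k u x = Xiter φ k v x
  | 0 => h
  | (k+1) => fun x hx => by
      simp only [Xiter, Xop]
      rw [(eqOn_nhds (Xiter_congr φ h k) hx).deriv_eq]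

lemma Xiter_shift (φ u : ℝ → ℝ) : ∀ k, Xiter φ k (Xop φ u) = Xiter φ (k + 1) u
  | 0 => rfl
  | (k+1) => by simp only [Xiter, Xiter_shift φ u k]

lemma contExt_congr {α β : EReal} {u v : ℝ → ℝ} (h : ∀ x ∈ EI α β, u x = v x)
    (hc : ContExt α β u) : ContExt α β v := by
  obtain ⟨g, hg, hgu⟩ := hc
  exact ⟨g, hg, fun x hx => (hgu x hx).trans (h x hx)⟩

lemma contExt_sub {α β : EReal} {u v : ℝ → ℝ} (hu : ContExt α β u) (hv : ContExt α β v) :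
    ContExt α β (fun x => u x - v x) := by
  obtain ⟨g, hg, hgu⟩ := hu
  obtain ⟨g', hg', hgv⟩ := hv
  exact ⟨fun y => g y - g' y, hg.sub hg', fun x hx => by simp only []; rw [hgu x hx, hgv x hx]⟩

lemma contExt_add {α β : EReal} {u v : ℝ → ℝ} (hu : ContExt α β u) (hv : ContExt α β v) :
    ContExt α β (fun x => u x + v x) := by
  obtain ⟨g, hg, hgu⟩ := hu
  obtain ⟨g', hg', hgv⟩ := hv
  exact ⟨fun y => g y + g' y, hg.add hg', fun x hx => by simp only []; rw [hgu x hx, hgv x hx]⟩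

lemma contExt_mul {α β : EReal} {u v : ℝ → ℝ} (hu : ContExt α β u) (hv : ContExt α β v) :
    ContExt α β (fun x => u x * v x) := by
  obtain ⟨g, hg, hgu⟩ := hu
  obtain ⟨g', hg', hgv⟩ := hv
  exact ⟨fun y => g y * g' y, hg.mul hg', fun x hx => by simp only []; rw [hgu x hx, hgv x hx]⟩

lemma CN_contExt {α β : EReal} {φ u : ℝ → ℝ} :
    ∀ n, u ∈ CN α β φ n → ContExt α β (Xiter φ n u)
  | 0, h => h
  | _+1, h => h.2.2

lemma CN_zero {α β : EReal} {φ u : ℝ → ℝ} : ∀ n, u ∈ CN α β φ n → ContExt α β u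
  | 0, h => h
  | n+1, h => CN_zero n h.1

lemma CN_diff {α β : EReal} {φ u : ℝ → ℝ} :
    ∀ n, u ∈ CN α β φ (n + 1) → ∀ x ∈ EI α β, DifferentiableAt ℝ u x
  | 0, h => h.2.1
  | n+1, h => CN_diff n h.1

lemma X_mem {α β : EReal} {φ u : ℝ → ℝ} :
    ∀ n, u ∈ CN α β φ (n + 1) → Xop φ u ∈ CN α β φ n
  | 0, h => h.2.2
  | n+1, h => ⟨X_mem n h.1,
      by rw [Xiter_shift]; exact h.2.1,
      by rw [Xiter_shift]; exact h.2.2⟩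

lemma CN_step {α β : EReal} {φ w h : ℝ → ℝ}
    (hwc : ContExt α β w) (hwd : ∀ x ∈ EI α β, DifferentiableAt ℝ w x)
    (hXw : ∀ x ∈ EI α β, Xop φ w x = h x) :
    ∀ n, h ∈ CN α β φ n → w ∈ CN α β φ (n + 1)
  | 0, hh => ⟨hwc, hwd, contExt_congr (fun x hx => (hXw x hx).symm) hh⟩
  | n+1, hh => by
      have key : ∀ k, ∀ x ∈ EI α β, Xiter φ (k + 1) w x = Xiter φ k h x := by
        intro k x hx
        rw [← Xiter_shift φ w k]
        exact Xiter_congr φ hXw k x hx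
      refine ⟨CN_step hwc hwd hXw n hh.1, ?_, ?_⟩
      · intro x hx
        exact ((eqOn_nhds (key n) hx).differentiableAt_iff).mpr (hh.2.1 x hx)
      · exact contExt_congr (fun x hx => (key (n+1) x hx).symm) hh.2.2

lemma CN_add {α β : EReal} {φ : ℝ → ℝ} :
    ∀ n, ∀ u v : ℝ → ℝ, u ∈ CN α β φ n → v ∈ CN α β φ n →
      (fun x => u x + v x) ∈ CN α β φ n
  | 0, u, v, hu, hv => contExt_add hu hv
  | n+1, u, v, hu, hv => by
      have hud := CN_diff n hu
      have hvd := CN_diff n hv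
      refine CN_step (contExt_add (CN_zero _ hu) (CN_zero _ hv))
        (fun x hx => (hud x hx).add (hvd x hx)) (h := fun x => Xop φ u x + Xop φ v x)
        (fun x hx => ?_) n (CN_add n _ _ (X_mem n hu) (X_mem n hv))
      simp only [Xop]
      rw [deriv_fun_add (hud x hx) (hvd x hx)]
      ring

lemma CN_sub {α β : EReal} {φ : ℝ → ℝ} :
    ∀ n, ∀ u v : ℝ → ℝ, u ∈ CN α β φ n → v ∈ CN α β φ n →
      (fun x => u x - v x) ∈ CN α β φ n
  | 0, u, v, hu, hv => contExt_sub hu hv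
  | n+1, u, v, hu, hv => by
      have hud := CN_diff n hu
      have hvd := CN_diff n hv
      refine CN_step (contExt_sub (CN_zero _ hu) (CN_zero _ hv))
        (fun x hx => (hud x hx).sub (hvd x hx)) (h := fun x => Xop φ u x - Xop φ v x)
        (fun x hx => ?_) n (CN_sub n _ _ (X_mem n hu) (X_mem n hv))
      simp only [Xop]
      rw [deriv_fun_sub (hud x hx) (hvd x hx)]
      ring

lemma CN_mul {α β : EReal} {φ : ℝ → ℝ} :
    ∀ n, ∀ u v : ℝ → ℝ, u ∈ CN α β φ n → v ∈ CN α β φ n →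
      (fun x => u x * v x) ∈ CN α β φ n
  | 0, u, v, hu, hv => contExt_mul hu hv
  | n+1, u, v, hu, hv => by
      have hud := CN_diff n hu
      have hvd := CN_diff n hv
      refine CN_step (contExt_mul (CN_zero _ hu) (CN_zero _ hv))
        (fun x hx => (hud x hx).mul (hvd x hx))
        (h := fun x => u x * Xop φ v x + v x * Xop φ u x)
        (fun x hx => ?_) n
        (CN_add n _ _ (CN_mul n _ _ hu.1 (X_mem n hv)) (CN_mul n _ _ hv.1 (X_mem n hu)))
      simp only [Xop]
      rw [deriv_fun_mul (hud x hx) (hvd x hx)]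
      ring

lemma CN_coeff {α β : EReal} {φ : ℝ → ℝ} (n : ℕ) (u v : ℝ → ℝ)
    (hu : u ∈ CN α β φ (n + 1)) (hv : v ∈ CN α β φ (n + 1)) :
    (fun x => u x * Xop φ v x - v x * Xop φ u x) ∈ CN α β φ n :=
  CN_sub n _ _ (CN_mul n _ _ hu.1 (X_mem n hv)) (CN_mul n _ _ hv.1 (X_mem n hu))

lemma bracket_identity {α β : EReal} {φ u v : ℝ → ℝ}
    (hφd : ∀ x ∈ EI α β, DifferentiableAt ℝ φ x)
    (hud : ∀ x ∈ EI α β, DifferentiableAt ℝ u x)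
    (hvd : ∀ x ∈ EI α β, DifferentiableAt ℝ v x) :
    ∀ x ∈ EI α β,
        (u x * φ x) * deriv (fun y => v y * φ y) x
            - (v x * φ x) * deriv (fun y => u y * φ y) x
          = (u x * Xop φ v x - v x * Xop φ u x) * φ x := by
  intro x hx
  rw [deriv_fun_mul (hvd x hx) (hφd x hx), deriv_fun_mul (hud x hx) (hφd x hx)]
  simp only [Xop]
  ring

/-- for `u, v ∈ C_φ^{(n+1)}` (with `n ∈ ℤ₊ ∪ {∞}`), on `(α,β)` the Lie
bracket of the vector fields `u·X = (uφ)∂_t` and `v·X = (vφ)∂_t` (with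
`[f∂_t, g∂_t] = (f g′ − g f′)∂_t`) equals `(u·X(v) − v·X(u))·X`, and the coefficient
`u·X(v) − v·X(u)` belongs to `C_φ^{(n)}`.  Hence
`[V_φ^{(n+1)}, V_φ^{(n+1)}] ⊆ V_φ^{(n)}`. -/
theorem bracket_Vphi (α β : EReal) (hαβ : α < β) (φ : ℝ → ℝ)
    (hφc : ContinuousOn φ (EI α β)) (hφpos : ∀ x ∈ EI α β, 0 < φ x)
    (hφd : ∀ x ∈ EI α β, DifferentiableAt ℝ φ x)
    (n : ℕ∞) (u v : ℝ → ℝ)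
    (hu : u ∈ CNE α β φ (n + 1)) (hv : v ∈ CNE α β φ (n + 1)) :
    (∀ x ∈ EI α β,
        (u x * φ x) * deriv (fun y => v y * φ y) x
            - (v x * φ x) * deriv (fun y => u y * φ y) x
          = (u x * Xop φ v x - v x * Xop φ u x) * φ x) ∧
      (fun x => u x * Xop φ v x - v x * Xop φ u x) ∈ CNE α β φ n := by
  induction n using WithTop.recTopCoe with
  | top =>
      have hu' : u ∈ Cinf α β φ := by exact hu
      have hv' : v ∈ Cinf α β φ := by exact hv
      have hum : ∀ k, u ∈ CN α β φ k := fun k => Set.mem_iInter.mp hu' k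
      have hvm : ∀ k, v ∈ CN α β φ k := fun k => Set.mem_iInter.mp hv' k
      refine ⟨bracket_identity hφd (CN_diff 0 (hum 1)) (CN_diff 0 (hvm 1)), ?_⟩
      simp only [CNE, WithTop.recTopCoe_top, Cinf]
      exact Set.mem_iInter.mpr fun k => CN_coeff k u v (hum (k + 1)) (hvm (k + 1))
  | coe k =>
      norm_cast at hu hv
      have hu' : u ∈ CN α β φ (k + 1) := by exact hu
      have hv' : v ∈ CN α β φ (k + 1) := by exact hv
      refine ⟨bracket_identity hφd (CN_diff k hu') (CN_diff k hv'), ?_⟩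
      exact CN_coeff k u v hu' hv'
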